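/- Let H be a complex Hilbert space, let r > 0 and K > 0, and let F, G : H → H satisfy Re⟨F(x), x⟩ = 0 for every x ∈ H and ‖G(x)‖ ≤ K for every x with ‖x‖ ≤ r. If v : ℝ → H is differentiable with v'(t) = F(v(t)) + G(v(t)) for all t and ‖v(0)‖ ≤ (3/4)·r, then for every t with |t| ≤ r/(8K) one has | ‖v(t)‖ − ‖v(0)‖ | ≤ r/8; in particular ‖v(t)‖ < r for all such t. -/

import Mathlib

open Set Real

lemma sqrt_eps_bounds (x ε : ℝ) (hx : 0 ≤ x) (hε : 0 ≤ ε) :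
    x ≤ Real.sqrt (x ^ 2 + ε ^ 2) ∧ Real.sqrt (x ^ 2 + ε ^ 2) ≤ x + ε := by
  constructor
  · exact Real.le_sqrt_of_sq_le (by nlinarith)
  · calc Real.sqrt (x ^ 2 + ε ^ 2) ≤ Real.sqrt ((x + ε) ^ 2) :=
        Real.sqrt_le_sqrt (by nlinarith)
      _ = x + ε := Real.sqrt_sq (by positivity)

/-- Key estimate: while the trajectory stays in the closed ball of radius `r`,
the norm is `K`-Lipschitz. -/
lemma key_est_aux {H : Type*} [NormedAddCommGroup H] [InnerProductSpace ℂ H]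
    (r K : ℝ)
    (F G : H → H)
    (hF : ∀ x : H, (inner ℂ (F x) x : ℂ).re = 0)
    (hG : ∀ x : H, ‖x‖ ≤ r → ‖G x‖ ≤ K)
    (v : ℝ → H)
    (hv : ∀ t : ℝ, HasDerivAt v (F (v t) + G (v t)) t)
    (b : ℝ) (hb : 0 ≤ b)
    (hball : ∀ s ∈ Icc (0:ℝ) b, ‖v s‖ ≤ r) :
    |‖v b‖ - ‖v 0‖| ≤ K * b := by
  letI : InnerProductSpace ℝ H := InnerProductSpace.rclikeToReal ℂ H
  have hre : ∀ x y : H, (inner ℝ x y : ℝ) = (inner ℂ x y : ℂ).re := fun x y => rfl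
  have main : ∀ ε : ℝ, 0 < ε → |‖v b‖ - ‖v 0‖| ≤ K * b + 2 * ε := by
    intro ε hε
    set g : ℝ → ℝ := fun s => Real.sqrt ((inner ℝ (v s) (v s) : ℝ) + ε ^ 2) with hg
    have hipos : ∀ s : ℝ, (0:ℝ) < (inner ℝ (v s) (v s) : ℝ) + ε ^ 2 := by
      intro s
      have := real_inner_self_nonneg (x := v s)
      nlinarith
    have hgderiv : ∀ s : ℝ, HasDerivAt g
        ((2 * (inner ℝ (F (v s) + G (v s)) (v s) : ℝ)) /
          (2 * Real.sqrt ((inner ℝ (v s) (v s) : ℝ) + ε ^ 2))) s := by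
      intro s
      have h1 : HasDerivAt (fun s => (inner ℝ (v s) (v s) : ℝ))
          (2 * (inner ℝ (F (v s) + G (v s)) (v s) : ℝ)) s := by
        have := (hv s).inner ℝ (hv s)
        exact this.congr_deriv (by rw [real_inner_comm]; ring)
      have h2 : HasDerivAt (fun s => (inner ℝ (v s) (v s) : ℝ) + ε ^ 2)
          (2 * (inner ℝ (F (v s) + G (v s)) (v s) : ℝ)) s := h1.add_const _
      exact h2.sqrt (ne_of_gt (hipos s))
    have hbound : ∀ s ∈ Icc (0:ℝ) b,
        ‖(2 * (inner ℝ (F (v s) + G (v s)) (v s) : ℝ)) /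
          (2 * Real.sqrt ((inner ℝ (v s) (v s) : ℝ) + ε ^ 2))‖ ≤ K := by
      intro s hs
      have hFin : (inner ℝ (F (v s)) (v s) : ℝ) = 0 := by rw [hre]; exact hF (v s)
      have hGK : ‖G (v s)‖ ≤ K := hG (v s) (hball s hs)
      have hK0 : (0:ℝ) ≤ K := le_trans (norm_nonneg _) hGK
      have hinum : |(inner ℝ (F (v s) + G (v s)) (v s) : ℝ)| ≤ K * ‖v s‖ := by
        rw [inner_add_left, hFin, zero_add]
        calc |(inner ℝ (G (v s)) (v s) : ℝ)| ≤ ‖G (v s)‖ * ‖v s‖ :=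
              abs_real_inner_le_norm _ _
          _ ≤ K * ‖v s‖ := by
              apply mul_le_mul_of_nonneg_right hGK (norm_nonneg _)
      have hsq : ‖v s‖ ≤ Real.sqrt ((inner ℝ (v s) (v s) : ℝ) + ε ^ 2) := by
        rw [real_inner_self_eq_norm_sq]
        exact (sqrt_eps_bounds _ _ (norm_nonneg _) (le_of_lt hε)).1
      have hsqpos : 0 < Real.sqrt ((inner ℝ (v s) (v s) : ℝ) + ε ^ 2) :=
        Real.sqrt_pos.mpr (hipos s)
      have hden : (0:ℝ) < 2 * Real.sqrt ((inner ℝ (v s) (v s) : ℝ) + ε ^ 2) := by linarith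
      rw [Real.norm_eq_abs, abs_div, abs_of_pos hden, div_le_iff₀ hden]
      calc |2 * (inner ℝ (F (v s) + G (v s)) (v s) : ℝ)|
          = 2 * |(inner ℝ (F (v s) + G (v s)) (v s) : ℝ)| := by
            rw [abs_mul, abs_two]
        _ ≤ 2 * (K * ‖v s‖) := by linarith
        _ ≤ K * (2 * Real.sqrt ((inner ℝ (v s) (v s) : ℝ) + ε ^ 2)) := by nlinarith
    have hlip : ‖g b - g 0‖ ≤ K * ‖b - 0‖ := by
      apply Convex.norm_image_sub_le_of_norm_hasDerivWithin_le
        (f' := fun s => (2 * (inner ℝ (F (v s) + G (v s)) (v s) : ℝ)) /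
          (2 * Real.sqrt ((inner ℝ (v s) (v s) : ℝ) + ε ^ 2)))
        (fun s hs => (hgderiv s).hasDerivWithinAt) hbound (convex_Icc 0 b)
        (left_mem_Icc.mpr hb) (right_mem_Icc.mpr hb)
    have hclose : ∀ s : ℝ, ‖v s‖ ≤ g s ∧ g s ≤ ‖v s‖ + ε := by
      intro s
      have hgs : g s = Real.sqrt (‖v s‖ ^ 2 + ε ^ 2) := by
        simp only [hg, real_inner_self_eq_norm_sq]
      rw [hgs]
      exact sqrt_eps_bounds _ _ (norm_nonneg _) (le_of_lt hε)
    obtain ⟨hb1, hb2⟩ := hclose b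
    obtain ⟨h01, h02⟩ := hclose 0
    rw [Real.norm_eq_abs, Real.norm_eq_abs, sub_zero, abs_of_nonneg hb] at hlip
    rw [abs_sub_le_iff] at hlip ⊢
    constructor <;> [linarith [hlip.1]; linarith [hlip.2]]
  by_contra hcon
  push_neg at hcon
  obtain ⟨ε, hε, hlt⟩ : ∃ ε > 0, K * b + 2 * ε < |‖v b‖ - ‖v 0‖| :=
    ⟨(|‖v b‖ - ‖v 0‖| - K * b) / 4, by linarith, by linarith⟩
  exact absurd (main ε hε) (not_le.mpr hlt)

/-- One-sided version of the theorem, for `t ∈ [0, r/(8K)]`. -/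
lemma half_aux {H : Type*} [NormedAddCommGroup H] [InnerProductSpace ℂ H]
    (r K : ℝ) (hr : 0 < r) (hK : 0 < K)
    (F G : H → H)
    (hF : ∀ x : H, (inner ℂ (F x) x : ℂ).re = 0)
    (hG : ∀ x : H, ‖x‖ ≤ r → ‖G x‖ ≤ K)
    (v : ℝ → H)
    (hv : ∀ t : ℝ, HasDerivAt v (F (v t) + G (v t)) t)
    (h0 : ‖v 0‖ ≤ 3 / 4 * r) :
    ∀ t : ℝ, 0 ≤ t → t ≤ r / (8 * K) → |‖v t‖ - ‖v 0‖| ≤ r / 8 ∧ ‖v t‖ < r := by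
  intro t ht htr
  have hvcont : Continuous v :=
    continuous_iff_continuousAt.mpr fun s => (hv s).continuousAt
  have hKt : K * t ≤ r / 8 := by
    rw [le_div_iff₀ (by positivity)] at htr
    nlinarith
  -- Claim: the trajectory stays strictly in the ball of radius r on [0, t].
  have claim : ∀ s ∈ Icc (0:ℝ) t, ‖v s‖ < r := by
    by_contra hcon
    push_neg at hcon
    obtain ⟨s0, hs0, hs0r⟩ := hcon
    set Bad : Set ℝ := {s ∈ Icc (0:ℝ) t | r ≤ ‖v s‖} with hBad
    have hBadne : Bad.Nonempty := ⟨s0, hs0, hs0r⟩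
    have hBadclosed : IsClosed Bad :=
      isClosed_Icc.inter (isClosed_le continuous_const hvcont.norm)
    have hBadcpt : IsCompact Bad :=
      (isCompact_Icc (a := (0:ℝ)) (b := t)).of_isClosed_subset hBadclosed
        (fun s hs => hs.1)
    obtain ⟨τ, hτBad, hτmin⟩ := hBadcpt.exists_isMinOn hBadne continuousOn_id
    obtain ⟨hτIcc, hτr⟩ := hτBad
    have hτpos : 0 < τ := by
      rcases lt_or_eq_of_le hτIcc.1 with h | h
      · exact h
      · exfalso; rw [← h] at hτr; nlinarith
    -- on [0, τ) the norm is < r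
    have hlt : ∀ s ∈ Ico (0:ℝ) τ, ‖v s‖ < r := by
      intro s hs
      by_contra hge
      push_neg at hge
      have hsBad : s ∈ Bad := ⟨⟨hs.1, le_trans (le_of_lt hs.2) hτIcc.2⟩, hge⟩
      exact absurd (hτmin hsBad) (not_le.mpr hs.2)
    -- hence ≤ r on [0, τ] by continuity
    have hle : ∀ s ∈ Icc (0:ℝ) τ, ‖v s‖ ≤ r := by
      have hsub : Ico (0:ℝ) τ ⊆ {s | ‖v s‖ ≤ r} := fun s hs => le_of_lt (hlt s hs)
      have hclosed : IsClosed {s : ℝ | ‖v s‖ ≤ r} :=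
        isClosed_le hvcont.norm continuous_const
      intro s hs
      have : s ∈ closure (Ico (0:ℝ) τ) := by
        rw [closure_Ico (ne_of_lt hτpos)]; exact hs
      exact hclosed.closure_subset_iff.mpr hsub this
    have hkey := key_est_aux r K F G hF hG v hv τ (le_of_lt hτpos) hle
    have hτt : τ ≤ t := hτIcc.2
    have hKτ : K * τ ≤ r / 8 := le_trans (by nlinarith) hKt
    have : ‖v τ‖ ≤ 7 / 8 * r := by
      rw [abs_sub_le_iff] at hkey
      linarith [hkey.1]
    linarith
  have hle : ∀ s ∈ Icc (0:ℝ) t, ‖v s‖ ≤ r := fun s hs => le_of_lt (claim s hs)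
  have hkey := key_est_aux r K F G hF hG v hv t ht hle
  exact ⟨le_trans hkey hKt, claim t ⟨ht, le_refl t⟩⟩

theorem norm_stability_tangential_field
    {H : Type*} [NormedAddCommGroup H] [InnerProductSpace ℂ H] [CompleteSpace H]
    (r K : ℝ) (hr : 0 < r) (hK : 0 < K)
    (F G : H → H)
    (hF : ∀ x : H, (inner ℂ (F x) x : ℂ).re = 0)
    (hG : ∀ x : H, ‖x‖ ≤ r → ‖G x‖ ≤ K)
    (v : ℝ → H)
    (hv : ∀ t : ℝ, HasDerivAt v (F (v t) + G (v t)) t)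
    (h0 : ‖v 0‖ ≤ 3 / 4 * r) :
    ∀ t : ℝ, |t| ≤ r / (8 * K) → |‖v t‖ - ‖v 0‖| ≤ r / 8 ∧ ‖v t‖ < r := by
  intro t htr
  rcases le_or_gt 0 t with ht | ht
  · rw [abs_of_nonneg ht] at htr
    exact half_aux r K hr hK F G hF hG v hv h0 t ht htr
  · -- reverse time
    set w : ℝ → H := fun s => v (-s) with hw
    have hw0 : w 0 = v 0 := by simp [hw]
    have hwv : ∀ s : ℝ, HasDerivAt w ((fun x => -F x) (w s) + (fun x => -G x) (w s)) s := by
      intro s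
      have h1 : HasDerivAt (fun s : ℝ => -s) (-1 : ℝ) s := by
        exact hasDerivAt_neg s
      have h2 := (hv (-s)).scomp s h1
      convert h2 using 1
      simp only [hw, neg_smul, one_smul, neg_add_rev]
      abel
      simp only [hw, neg_smul, one_smul, neg_add_rev]
      abel
    have hF' : ∀ x : H, (inner ℂ ((fun x => -F x) x) x : ℂ).re = 0 := by
      intro x
      simp only [inner_neg_left, Complex.neg_re, hF x, neg_zero]
    have hG' : ∀ x : H, ‖x‖ ≤ r → ‖(fun x => -G x) x‖ ≤ K := by
      intro x hx
      simpa using hG x hx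
    have h0' : ‖w 0‖ ≤ 3 / 4 * r := by rw [hw0]; exact h0
    have htr' : -t ≤ r / (8 * K) := by rwa [abs_of_neg ht] at htr
    have := half_aux r K hr hK _ _ hF' hG' w hwv h0' (-t) (by linarith) htr'
    rw [hw0] at this
    simpa [hw] using this
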